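/- Let (M, ⊥) be a separoid, G = (V, E) a graph with vertex set V = [n], and X_1, …, X_n ∈ M. Then X_1, …, X_n form a Markov random field with respect to ⊥ and G (i.e. satisfy the global Markov property) if and only if they satisfy the cutset property with respect to ⊥ and G. -/

import Mathlib

namespace AMRF
/-- The separoid axioms (S1)–(S5) for a ternary relation `ind X Y Z` (read `X ⊥ Y | Z`)
on a commutative idempotent monoid. -/
def IsSeparoid {M : Type*} [CommMonoid M] (ind : M → M → M → Prop) : Prop :=
  (∀ X Y Z : M, ind X Y Z → ind Y X Z) ∧
  (∀ W Y Z : M, W * Z = Z → ind W Y Z) ∧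
  (∀ W X Y Z : M, ind (W * X) Y Z → ind X Y Z) ∧
  (∀ W X Y Z : M, ind (W * X) Y Z → ind W Y (X * Z)) ∧
  (∀ W X Y Z : M, ind W Y (X * Z) → ind X Y Z → ind (W * X) Y Z)
/-- The graph `G − U`: keep only edges with both endpoints outside `U`. -/
def delGraph {V : Type*} (G : SimpleGraph V) (U : Finset V) : SimpleGraph V where
  Adj a b := G.Adj a b ∧ a ∉ U ∧ b ∉ U
  symm := ⟨fun _ _ h => ⟨h.1.symm, h.2.2, h.2.1⟩⟩
  loopless := ⟨fun a h => G.loopless.irrefl a h.1⟩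

/-- `C` separates `A` from `B` in `G`: every walk from a vertex of `A` to a vertex of `B`
passes through some vertex of `C`. -/
def Separates {V : Type*} (G : SimpleGraph V) (A B C : Finset V) : Prop :=
  ∀ a ∈ A, ∀ b ∈ B, ∀ w : G.Walk a b, ∃ c ∈ C, c ∈ w.support

/-- `U` is a cutset: `G − U` has more than one connected component. -/
def IsCutset {V : Type*} (G : SimpleGraph V) (U : Finset V) : Prop :=
  ∃ v w : V, v ∉ U ∧ w ∉ U ∧ ¬ (delGraph G U).Reachable v w

/-- `C` is (the vertex set of) a connected component of `G − U`. -/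
def IsCompOf {V : Type*} (G : SimpleGraph V) (U C : Finset V) : Prop :=
  ∃ v, v ∉ U ∧ ∀ w, w ∈ C ↔ (delGraph G U).Reachable v w

/-- The global Markov property: `X₁, …, X_n` form a Markov random field with respect to the
independence relation `ind` and the graph `Gr`. -/
def IsMRF {M : Type*} [CommMonoid M] {n : ℕ} (ind : M → M → M → Prop)
    (Gr : SimpleGraph (Fin n)) (X : Fin n → M) : Prop :=
  ∀ A B C : Finset (Fin n), Disjoint A B → Disjoint A C → Disjoint B C →
    Separates Gr A B C →
    ind (∏ a ∈ A, X a) (∏ b ∈ B, X b) (∏ c ∈ C, X c)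

/-- The cutset property: for every cutset `U` of `Gr`, the elements `X_{V₁(U)}, …, X_{V_s(U)}`
corresponding to the components of `Gr − U` are mutually independent given `X_U`
(each component is independent of the product of all other components given `X_U`). -/
def CutsetProperty {M : Type*} [CommMonoid M] {n : ℕ} (ind : M → M → M → Prop)
    (Gr : SimpleGraph (Fin n)) (X : Fin n → M) : Prop :=
  ∀ U : Finset (Fin n), IsCutset Gr U →
    ∀ C : Finset (Fin n), IsCompOf Gr U C →
      ind (∏ i ∈ C, X i) (∏ i ∈ (Finset.univ \ U) \ C, X i) (∏ i ∈ U, X i)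

private lemma walk_support_not_mem {n : ℕ} {Gr : SimpleGraph (Fin n)} {U : Finset (Fin n)}
    {a b : Fin n} (p : (delGraph Gr U).Walk a b) (ha : a ∉ U) :
    ∀ x ∈ p.support, x ∉ U := by
  induction p with
  | nil => intro x hx; simp at hx; subst hx; exact ha
  | cons h p ih =>
    intro x hx
    rw [SimpleGraph.Walk.support_cons] at hx
    rcases List.mem_cons.mp hx with rfl | hx
    · exact ha
    · exact ih h.2.2 x hx

private lemma reach_not_mem {n : ℕ} {Gr : SimpleGraph (Fin n)} {U : Finset (Fin n)}
    {a b : Fin n} (h : (delGraph Gr U).Reachable a b) (ha : a ∉ U) : b ∉ U := by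
  obtain ⟨p⟩ := h
  exact walk_support_not_mem p ha b p.end_mem_support

private lemma walk_lift {n : ℕ} {Gr : SimpleGraph (Fin n)} {U : Finset (Fin n)}
    {a b : Fin n} (p : (delGraph Gr U).Walk a b) :
    ∃ q : Gr.Walk a b, q.support = p.support := by
  induction p with
  | nil => exact ⟨SimpleGraph.Walk.nil, rfl⟩
  | cons h p ih =>
    obtain ⟨q, hq⟩ := ih
    exact ⟨SimpleGraph.Walk.cons h.1 q, by simp [hq]⟩

private lemma walk_avoid_reach {n : ℕ} {Gr : SimpleGraph (Fin n)} {U : Finset (Fin n)}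
    {a b : Fin n} (p : Gr.Walk a b) (hs : ∀ x ∈ p.support, x ∉ U) :
    (delGraph Gr U).Reachable a b := by
  induction p with
  | nil => exact SimpleGraph.Reachable.refl _
  | cons h p ih =>
    rename_i u v w
    have h1 : u ∉ U := hs _ (by simp)
    have h2 : v ∉ U := hs _ (by
      rw [SimpleGraph.Walk.support_cons]
      exact List.mem_cons_of_mem _ p.start_mem_support)
    have hadj : (delGraph Gr U).Adj u v := ⟨h, h1, h2⟩
    exact hadj.reachable.trans (ih (fun x hx => hs x (by
      rw [SimpleGraph.Walk.support_cons]; exact List.mem_cons_of_mem _ hx)))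

private lemma cutset_union {M : Type*} [CommMonoid M]
    {ind : M → M → M → Prop} (hsep : IsSeparoid ind)
    {n : ℕ} {Gr : SimpleGraph (Fin n)} {X : Fin n → M}
    (hcut : CutsetProperty ind Gr X) (U : Finset (Fin n)) (hU : IsCutset Gr U)
    (S : Finset (Fin n)) (hSU : ∀ v ∈ S, v ∉ U)
    (hcl : ∀ v ∈ S, ∀ w, (delGraph Gr U).Reachable v w → w ∈ S) :
    ind (∏ i ∈ S, X i) (∏ i ∈ (Finset.univ \ U) \ S, X i) (∏ i ∈ U, X i) := by
  classical
  obtain ⟨s1, s2, s3, s4, s5⟩ := hsep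
  revert hSU hcl
  induction S using Finset.strongInduction with
  | _ S IH =>
  intro hSU hcl
  rcases S.eq_empty_or_nonempty with rfl | ⟨v, hv⟩
  · simp only [Finset.prod_empty]
    exact s2 _ _ _ (one_mul _)
  · have hvU : v ∉ U := hSU v hv
    set K : Finset (Fin n) := Finset.univ.filter
      (fun w => (delGraph Gr U).Reachable v w) with hKdef
    have hKmem : ∀ w, w ∈ K ↔ (delGraph Gr U).Reachable v w := by
      intro w; simp [hKdef]
    have hcomp : IsCompOf Gr U K := ⟨v, hvU, hKmem⟩
    have hKS : K ⊆ S := fun w hw => hcl v hv w ((hKmem w).mp hw)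
    have hKU : ∀ w ∈ K, w ∉ U := fun w hw => reach_not_mem ((hKmem w).mp hw) hvU
    have hvK : v ∈ K := (hKmem v).mpr (SimpleGraph.Reachable.refl v)
    have hss : S \ K ⊂ S := Finset.sdiff_ssubset hKS ⟨v, hvK⟩
    have hcl' : ∀ a ∈ S \ K, ∀ w, (delGraph Gr U).Reachable a w → w ∈ S \ K := by
      intro a ha w hr
      rw [Finset.mem_sdiff] at ha ⊢
      refine ⟨hcl a ha.1 w hr, fun hwK => ha.2 ?_⟩
      exact (hKmem a).mpr (((hKmem w).mp hwK).trans hr.symm)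
    have hIH := IH (S \ K) hss (fun a ha => hSU a (Finset.mem_sdiff.mp ha).1) hcl'
    have hKind := hcut U hU K hcomp
    -- set identities
    have dKS' : Disjoint K (S \ K) := Finset.disjoint_sdiff
    have dKR : Disjoint K ((Finset.univ \ U) \ S) := by
      rw [Finset.disjoint_left]
      intro x hxK hxR
      exact (Finset.mem_sdiff.mp hxR).2 (hKS hxK)
    have dS'R : Disjoint (S \ K) ((Finset.univ \ U) \ S) := by
      rw [Finset.disjoint_left]
      intro x hx hxR
      exact (Finset.mem_sdiff.mp hxR).2 (Finset.mem_sdiff.mp hx).1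
    have eq1 : (Finset.univ \ U) \ (S \ K) = K ∪ ((Finset.univ \ U) \ S) := by
      ext x
      simp only [Finset.mem_sdiff, Finset.mem_union, Finset.mem_univ, true_and]
      constructor
      · rintro ⟨hxU, hx⟩
        by_cases hxK : x ∈ K
        · exact Or.inl hxK
        · exact Or.inr ⟨hxU, fun hxS => hx ⟨hxS, hxK⟩⟩
      · rintro (hxK | ⟨hxU, hxS⟩)
        · exact ⟨hKU x hxK, fun h => h.2 hxK⟩
        · exact ⟨hxU, fun h => hxS h.1⟩
    have eq2 : (Finset.univ \ U) \ K = (S \ K) ∪ ((Finset.univ \ U) \ S) := by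
      ext x
      simp only [Finset.mem_sdiff, Finset.mem_union, Finset.mem_univ, true_and]
      constructor
      · rintro ⟨hxU, hxK⟩
        by_cases hxS : x ∈ S
        · exact Or.inl ⟨hxS, hxK⟩
        · exact Or.inr ⟨hxU, hxS⟩
      · rintro (⟨hxS, hxK⟩ | ⟨hxU, hxS⟩)
        · exact ⟨hSU x hxS, hxK⟩
        · exact ⟨hxU, fun hxK => hxS (hKS hxK)⟩
    have eq3 : S = K ∪ (S \ K) := by
      rw [Finset.union_sdiff_of_subset hKS]
    rw [eq2, Finset.prod_union dS'R] at hKind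
    rw [eq1, Finset.prod_union dKR] at hIH
    -- separoid computation
    have step1 : ind (∏ i ∈ K, X i)
        (∏ i ∈ (Finset.univ \ U) \ S, X i)
        ((∏ i ∈ S \ K, X i) * ∏ i ∈ U, X i) := by
      have h := s1 _ _ _ hKind
      rw [mul_comm] at h
      exact s1 _ _ _ (s4 _ _ _ _ h)
    have step2 : ind (∏ i ∈ S \ K, X i) (∏ i ∈ (Finset.univ \ U) \ S, X i)
        (∏ i ∈ U, X i) :=
      s1 _ _ _ (s3 _ _ _ _ (s1 _ _ _ hIH))
    have final := s5 _ _ _ _ step1 step2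
    have pS : (∏ i ∈ S, X i) = (∏ i ∈ K, X i) * ∏ i ∈ S \ K, X i := by
      conv_lhs => rw [eq3]
      rw [Finset.prod_union dKS']
    rw [pS]
    exact final


/-- In a separoid, `X₁, …, X_n` form a Markov random field with respect to
`⊥` and a graph `Gr` on `[n]` (global Markov property) if and only if they satisfy the
cutset property. -/
theorem mrf_iff_cutset_property
    {M : Type*} [CommMonoid M] (hidem : ∀ x : M, x * x = x)
    (ind : M → M → M → Prop) (hsep : IsSeparoid ind)
    (n : ℕ) (Gr : SimpleGraph (Fin n)) (X : Fin n → M) :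
    IsMRF ind Gr X ↔ CutsetProperty ind Gr X := by
  classical
  obtain ⟨s1, s2, s3, s4, s5⟩ := hsep
  constructor
  · intro hmrf U hU C hcomp
    obtain ⟨v, hvU, hC⟩ := hcomp
    have hCU : Disjoint C U := by
      rw [Finset.disjoint_left]
      intro x hx
      exact reach_not_mem ((hC x).mp hx) hvU
    have hCB : Disjoint C ((Finset.univ \ U) \ C) := Finset.disjoint_sdiff
    have hBU : Disjoint ((Finset.univ \ U) \ C) U := by
      rw [Finset.disjoint_left]
      intro x hx
      exact (Finset.mem_sdiff.mp (Finset.mem_sdiff.mp hx).1).2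
    refine hmrf C ((Finset.univ \ U) \ C) U hCB hCU hBU ?_
    intro a ha b hb w
    by_contra hcon
    push_neg at hcon
    have hreach : (delGraph Gr U).Reachable a b :=
      walk_avoid_reach w (fun x hx hxU => hcon x hxU hx)
    have hbC : b ∈ C := (hC b).mpr (((hC a).mp ha).trans hreach)
    exact (Finset.mem_sdiff.mp hb).2 hbC
  · intro hcut A B C hAB hAC hBC hsepABC
    rcases A.eq_empty_or_nonempty with rfl | ⟨a0, ha0⟩
    · simp only [Finset.prod_empty]
      exact s2 _ _ _ (one_mul _)
    rcases B.eq_empty_or_nonempty with rfl | ⟨b0, hb0⟩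
    · simp only [Finset.prod_empty]
      exact s1 _ _ _ (s2 _ _ _ (one_mul _))
    have ha0C : a0 ∉ C := Finset.disjoint_left.mp hAC ha0
    have hb0C : b0 ∉ C := Finset.disjoint_left.mp hBC hb0
    have hCcut : IsCutset Gr C := by
      refine ⟨a0, b0, ha0C, hb0C, fun hr => ?_⟩
      obtain ⟨p⟩ := hr
      obtain ⟨q, hq⟩ := walk_lift p
      obtain ⟨c, hcC, hcsupp⟩ := hsepABC a0 ha0 b0 hb0 q
      rw [hq] at hcsupp
      exact walk_support_not_mem p ha0C c hcsupp hcC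
    set A' : Finset (Fin n) := Finset.univ.filter
      (fun w => w ∉ C ∧ ∃ a ∈ A, (delGraph Gr C).Reachable a w) with hA'def
    have hA'mem : ∀ w, w ∈ A' ↔ (w ∉ C ∧ ∃ a ∈ A, (delGraph Gr C).Reachable a w) := by
      intro w; simp [hA'def]
    have hSU : ∀ v ∈ A', v ∉ C := fun v hv => ((hA'mem v).mp hv).1
    have hcl : ∀ v ∈ A', ∀ w, (delGraph Gr C).Reachable v w → w ∈ A' := by
      intro v hv w hr
      obtain ⟨hvC, a, ha, har⟩ := (hA'mem v).mp hv
      exact (hA'mem w).mpr ⟨reach_not_mem hr hvC, a, ha, har.trans hr⟩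
    have main := cutset_union ⟨s1, s2, s3, s4, s5⟩ hcut C hCcut A' hSU hcl
    have hAA' : A ⊆ A' := by
      intro a ha
      exact (hA'mem a).mpr ⟨Finset.disjoint_left.mp hAC ha, a, ha,
        SimpleGraph.Reachable.refl a⟩
    have hBsub : B ⊆ (Finset.univ \ C) \ A' := by
      intro b hb
      rw [Finset.mem_sdiff, Finset.mem_sdiff]
      refine ⟨⟨Finset.mem_univ b, Finset.disjoint_left.mp hBC hb⟩, fun hbA' => ?_⟩
      obtain ⟨hbC, a, ha, har⟩ := (hA'mem b).mp hbA'
      obtain ⟨p⟩ := har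
      obtain ⟨q, hq⟩ := walk_lift p
      obtain ⟨c, hcC, hcsupp⟩ := hsepABC a ha b hb q
      rw [hq] at hcsupp
      exact walk_support_not_mem p (Finset.disjoint_left.mp hAC ha) c hcsupp hcC
    rw [← Finset.prod_sdiff hAA'] at main
    have h1 := s1 _ _ _ (s3 _ _ _ _ main)
    rw [← Finset.prod_sdiff hBsub] at h1
    exact s1 _ _ _ (s3 _ _ _ _ h1)


end AMRF
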